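/- If the random function values {g(RE) : R ∈ R} are almost surely distinct and E is sign-symmetric, then the randomization test that rejects when p(E) ≤ k/2^n has rejection probability exactly k/2^n, for any integer 0 ≤ k ≤ 2^n. -/

import Mathlib

open MeasureTheory Matrix
open scoped ENNReal

instance matrixMeasurableSpace (m k : Type*) : MeasurableSpace (Matrix m k ℝ) :=
  MeasurableSpace.pi

/-- The diagonal sign matrix associated to a sign pattern `s`. -/
noncomputable def signMat {n : ℕ} (s : Fin n → Bool) : Matrix (Fin n) (Fin n) ℝ :=
  Matrix.diagonal fun i => if s i then (1 : ℝ) else -1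

lemma bool_beq_invol (a b : Bool) : ((a == b) == b) = a := by cases a <;> cases b <;> rfl

lemma signMat_mul_signMat {n : ℕ} (s r : Fin n → Bool) :
    signMat s * signMat r = signMat (fun i => s i == r i) := by
  unfold signMat
  rw [Matrix.diagonal_mul_diagonal]
  refine congrArg Matrix.diagonal (funext fun i => ?_)
  show (if s i then (1 : ℝ) else -1) * (if r i then (1 : ℝ) else -1)
      = if (s i == r i) then (1 : ℝ) else -1
  cases s i <;> cases r i <;> norm_num

lemma measurable_signMat_mul {n p : ℕ} (s : Fin n → Bool) :
    Measurable fun M : Matrix (Fin n) (Fin p) ℝ => signMat s * M := by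
  apply measurable_pi_lambda
  intro i
  apply measurable_pi_lambda
  intro j
  have h : Measurable fun M : Matrix (Fin n) (Fin p) ℝ => M i j :=
    (measurable_pi_apply j).comp (measurable_pi_apply i)
  simp only [signMat, Matrix.diagonal_mul]
  exact h.const_mul _

lemma rank_card_eq {α : Type*} [Fintype α] [DecidableEq α] (f : α → ℝ)
    (hf : Function.Injective f) (k : ℕ) (hk : k ≤ Fintype.card α) :
    (Finset.univ.filter fun r =>
      (Finset.univ.filter fun t : α => f r ≤ f t).card ≤ k).card = k := by
  classical
  set m := Fintype.card α with hm
  set rank : α → ℕ := fun r => (Finset.univ.filter fun t : α => f r ≤ f t).card with hrank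
  have hanti : ∀ r r', f r < f r' → rank r' < rank r := by
    intro r r' h
    apply Finset.card_lt_card
    rw [Finset.ssubset_iff_of_subset]
    · refine ⟨r, by simp, ?_⟩
      simp only [Finset.mem_filter, Finset.mem_univ, true_and, not_le]
      exact h
    · intro t ht
      simp only [Finset.mem_filter, Finset.mem_univ, true_and] at ht ⊢
      exact le_trans h.le ht
  have hinj : Function.Injective rank := by
    intro a b hab
    rcases lt_trichotomy (f a) (f b) with h | h | h
    · exact absurd hab (hanti a b h).ne'
    · exact hf h
    · exact absurd hab (hanti b a h).ne
  have himg : Finset.univ.image rank = Finset.Icc 1 m := by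
    apply Finset.eq_of_subset_of_card_le
    · intro x hx
      simp only [Finset.mem_image, Finset.mem_univ, true_and] at hx
      obtain ⟨r, rfl⟩ := hx
      simp only [Finset.mem_Icc]
      constructor
      · have hr : r ∈ Finset.univ.filter fun t : α => f r ≤ f t := by simp
        exact Finset.card_pos.mpr ⟨r, hr⟩
      · calc rank r ≤ Finset.univ.card := Finset.card_filter_le _ _
          _ = m := Finset.card_univ
    · rw [Finset.card_image_of_injective _ hinj, Finset.card_univ, Nat.card_Icc]
      omega
  have key : (Finset.univ.filter fun r => rank r ≤ k).card
      = ((Finset.univ.image rank).filter fun x => x ≤ k).card := by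
    rw [Finset.filter_image, Finset.card_image_of_injective _ hinj]
  rw [key, himg]
  have hIcc : (Finset.Icc 1 m).filter (fun x => x ≤ k) = Finset.Icc 1 k := by
    ext x
    simp only [Finset.mem_filter, Finset.mem_Icc]
    omega
  rw [hIcc, Nat.card_Icc]
  omega

/-- If the values {g(RE) : R} are almost surely distinct and E is sign-symmetric,
then the randomization test rejecting when p(E) ≤ k/2^n has rejection probability
exactly k/2^n, for any integer 0 ≤ k ≤ 2^n. -/
theorem randomization_test_exact_size
    {Ω : Type*} [MeasurableSpace Ω] (P : Measure Ω) [IsProbabilityMeasure P]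
    {n p : ℕ} (E : Ω → Matrix (Fin n) (Fin p) ℝ) (hE : Measurable E)
    (hinv : ∀ s : Fin n → Bool, P.map (fun ω => signMat s * E ω) = P.map E)
    (g : Matrix (Fin n) (Fin p) ℝ → ℝ) (hg : Measurable g)
    (hdistinct : ∀ᵐ ω ∂P, Function.Injective (fun s : Fin n → Bool => g (signMat s * E ω)))
    (pval : Ω → ℝ)
    (hpval : ∀ ω, pval ω =
      ((Finset.univ.filter fun s : Fin n → Bool =>
          g (E ω) ≤ g (signMat s * E ω)).card : ℝ) / 2 ^ n)
    (k : ℕ) (hk : k ≤ 2 ^ n) :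
    P {ω | pval ω ≤ (k : ℝ) / 2 ^ n} = (k : ℝ≥0∞) / 2 ^ n := by
  classical
  set Fc : Matrix (Fin n) (Fin p) ℝ → ℕ :=
    fun M => (Finset.univ.filter fun s : Fin n → Bool => g M ≤ g (signMat s * M)).card with hFcdef
  have hcard : Fintype.card (Fin n → Bool) = 2 ^ n := by simp
  have hFc : Measurable Fc := by
    have heq : Fc = fun M => ∑ s : Fin n → Bool,
        if g M ≤ g (signMat s * M) then 1 else 0 := by
      funext M
      show (Finset.univ.filter fun s : Fin n → Bool => g M ≤ g (signMat s * M)).card = _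
      exact Finset.card_filter _ _
    rw [heq]
    apply Finset.measurable_sum
    intro s _
    exact Measurable.ite (measurableSet_le hg (hg.comp (measurable_signMat_mul s)))
      measurable_const measurable_const
  have hAmeas : MeasurableSet {M : Matrix (Fin n) (Fin p) ℝ | Fc M ≤ k} :=
    hFc measurableSet_Iic
  -- rewrite the event
  have hset : {ω | pval ω ≤ (k : ℝ) / 2 ^ n} = {ω | Fc (E ω) ≤ k} := by
    ext ω
    have h2 : (0 : ℝ) < 2 ^ n := by positivity
    simp only [Set.mem_setOf_eq, hpval ω]
    rw [div_le_div_iff₀ h2 h2, mul_le_mul_iff_of_pos_right h2, Nat.cast_le]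
  -- invariance
  have hinv' : ∀ r : Fin n → Bool,
      P {ω | Fc (signMat r * E ω) ≤ k} = P {ω | Fc (E ω) ≤ k} := by
    intro r
    have hfr : Measurable fun ω => signMat r * E ω := (measurable_signMat_mul r).comp hE
    have h1 : {ω | Fc (signMat r * E ω) ≤ k}
        = (fun ω => signMat r * E ω) ⁻¹' {M | Fc M ≤ k} := rfl
    have h2 : {ω | Fc (E ω) ≤ k} = E ⁻¹' {M | Fc M ≤ k} := rfl
    rw [h1, h2, ← Measure.map_apply hfr hAmeas, ← Measure.map_apply hE hAmeas, hinv r]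
  have hmeas_r : ∀ r : Fin n → Bool, MeasurableSet {ω | Fc (signMat r * E ω) ≤ k} :=
    fun r => (hFc.comp ((measurable_signMat_mul r).comp hE)) measurableSet_Iic
  have hinvol : ∀ r : Fin n → Bool,
      Function.Involutive (fun s : Fin n → Bool => fun i => s i == r i) := by
    intro r s
    funext i
    exact bool_beq_invol (s i) (r i)
  -- a.e. the sum of indicators equals k
  have hae : ∀ᵐ ω ∂P, ∑ r : Fin n → Bool,
      ({ω' | Fc (signMat r * E ω') ≤ k} : Set Ω).indicator (1 : Ω → ℝ≥0∞) ω = (k : ℝ≥0∞) := by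
    filter_upwards [hdistinct] with ω hω
    have hFcr : ∀ r : Fin n → Bool, Fc (signMat r * E ω)
        = (Finset.univ.filter fun t : Fin n → Bool =>
            g (signMat r * E ω) ≤ g (signMat t * E ω)).card := by
      intro r
      show (Finset.univ.filter fun s : Fin n → Bool =>
          g (signMat r * E ω) ≤ g (signMat s * (signMat r * E ω))).card = _
      simp only [← Matrix.mul_assoc, signMat_mul_signMat]
      rw [Finset.card_filter, Finset.card_filter]
      exact Fintype.sum_bijective _ (hinvol r).bijective _ _ (fun s => rfl)
    have hcount : (Finset.univ.filter fun r : Fin n → Bool =>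
        Fc (signMat r * E ω) ≤ k).card = k := by
      have h := rank_card_eq (fun t : Fin n → Bool => g (signMat t * E ω)) hω k
        (by rw [hcard]; exact hk)
      simp only [hFcr]
      exact h
    simp only [Set.indicator_apply, Set.mem_setOf_eq, Pi.one_apply]
    rw [Finset.sum_boole, hcount]
  -- the key identity
  have hkey : (2 ^ n : ℝ≥0∞) * P {ω | Fc (E ω) ≤ k} = (k : ℝ≥0∞) := by
    calc (2 ^ n : ℝ≥0∞) * P {ω | Fc (E ω) ≤ k}
        = ∑ r : Fin n → Bool, P {ω | Fc (signMat r * E ω) ≤ k} := by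
          simp only [hinv']
          rw [Finset.sum_const, Finset.card_univ, hcard, nsmul_eq_mul]
          norm_cast
      _ = ∑ r : Fin n → Bool, ∫⁻ ω,
            ({ω' | Fc (signMat r * E ω') ≤ k} : Set Ω).indicator (1 : Ω → ℝ≥0∞) ω ∂P := by
          refine Finset.sum_congr rfl fun r _ => ?_
          rw [lintegral_indicator_one (hmeas_r r)]
      _ = ∫⁻ ω, ∑ r : Fin n → Bool,
            ({ω' | Fc (signMat r * E ω') ≤ k} : Set Ω).indicator (1 : Ω → ℝ≥0∞) ω ∂P := by
          rw [lintegral_finset_sum]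
          intro r _
          exact measurable_one.indicator (hmeas_r r)
      _ = ∫⁻ _, (k : ℝ≥0∞) ∂P := lintegral_congr_ae hae
      _ = (k : ℝ≥0∞) := by simp
  rw [hset, ENNReal.eq_div_iff (by positivity) (by simp)]
  exact hkey
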